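/- arXiv:2107.12974 — 2 statements merged into one kernel-verified Lean document; each statement's English description precedes it below -/
import Mathlib

section
/- Suppose a, b, s are positive integers with b ≥ 2 and a ≤ (2^s + 1)(b + s). Then there exists a 2^{−b+1}-almost strongly 2-universal family of functions from {0,1}^a to {0,1}^b indexed by keys of length y = 3b + 2s bits, i.e., a family {f_κ}_{κ∈{0,1}^y} such that (i) for every m and t, the fraction of keys with f_κ(m) = t equals 2^{−b}, and (ii) for distinct m₁, m₂ and any t₁, t₂, the fraction of keys κ with f_κ(m₂) = t₂ for which also f_κ(m₁) = t₁ is at most 2^{−b+1}. -/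
open Finset Function Polynomial


-- fiber counting for surjective additive homs
lemma fiber_mul_card {G H : Type*} [AddCommGroup G] [AddCommGroup H] [Fintype G] [Fintype H]
    [DecidableEq H] (f : G →+ H) (hf : Surjective f) (y : H) :
    (univ.filter fun x => f x = y).card * Fintype.card H = Fintype.card G := by
  have hconst : ∀ y₁ y₂ : H,
      (univ.filter fun x => f x = y₁).card = (univ.filter fun x => f x = y₂).card := by
    intro y₁ y₂
    obtain ⟨g1, hg1⟩ := hf y₁
    obtain ⟨g2, hg2⟩ := hf y₂
    apply Finset.card_nbij' (fun x => x - g1 + g2) (fun x => x - g2 + g1)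
    · intro x hx
      simp only [mem_coe, mem_filter, mem_univ, true_and] at hx ⊢
      simp [map_add, map_sub, hx, hg1, hg2]
    · intro x hx
      simp only [mem_coe, mem_filter, mem_univ, true_and] at hx ⊢
      simp [map_add, map_sub, hx, hg1, hg2]
    · intro x _; simp
    · intro x _; simp
  have h1 : Fintype.card G = ∑ y' : H, (univ.filter fun x => f x = y').card := by
    rw [← card_univ]
    exact Finset.card_eq_sum_card_fiberwise (fun x _ => mem_univ (f x))
  rw [h1, Finset.sum_congr rfl (fun y' _ => hconst y' y), Finset.sum_const, card_univ,
    smul_eq_mul, mul_comm]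


lemma roots_card_le {K : Type*} [Field K] [Fintype K] [DecidableEq K] {N : ℕ}
    (c : Fin N → K) (hc : c ≠ 0) :
    (univ.filter fun x : K => ∑ i : Fin N, c i * x ^ (i : ℕ) = 0).card ≤ N - 1 := by
  set q : Polynomial K := ∑ i : Fin N, C (c i) * X ^ (i : ℕ) with hq
  obtain ⟨i, hi⟩ : ∃ i, c i ≠ 0 := by
    by_contra h; push_neg at h; exact hc (funext h)
  have hco : q.coeff (i : ℕ) = c i := by
    rw [hq, finset_sum_coeff, Finset.sum_eq_single i]
    · simp [coeff_C_mul, coeff_X_pow]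
    · intro j _ hji
      have hne : (i : ℕ) ≠ (j : ℕ) := fun h => hji (Fin.ext h.symm)
      simp [coeff_C_mul, coeff_X_pow, hne]
    · simp
  have hq0 : q ≠ 0 := fun h0 => hi (by rw [← hco, h0, coeff_zero])
  have hdeg : q.natDegree ≤ N - 1 := by
    apply Polynomial.natDegree_sum_le_of_forall_le
    intro j _
    calc (C (c j) * X ^ (j : ℕ)).natDegree ≤ (X ^ (j:ℕ) : Polynomial K).natDegree :=
          natDegree_C_mul_le _ _
      _ = (j : ℕ) := natDegree_X_pow _
      _ ≤ N - 1 := by have := j.isLt; omega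
  have heval : ∀ x : K, q.eval x = ∑ i : Fin N, c i * x ^ (i : ℕ) := by
    intro x; rw [hq, eval_finset_sum]; simp
  have hsub : (univ.filter fun x : K => ∑ i : Fin N, c i * x ^ (i : ℕ) = 0)
      ⊆ q.roots.toFinset := by
    intro x hx
    simp only [mem_filter, mem_univ, true_and] at hx
    rw [Multiset.mem_toFinset, mem_roots hq0]
    exact (heval x).trans hx
  calc (univ.filter fun x : K => ∑ i : Fin N, c i * x ^ (i : ℕ) = 0).card
      ≤ q.roots.toFinset.card := Finset.card_le_card hsub
    _ ≤ Multiset.card q.roots := Multiset.toFinset_card_le _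
    _ ≤ q.natDegree := card_roots' q
    _ ≤ N - 1 := hdeg

lemma countA {K V : Type*} [Field K] [Fintype K]
    [AddCommGroup V] [Fintype V] [DecidableEq V] (π : K →+ V) {N : ℕ} (c : Fin N → K) (t : V) :
    (univ.filter fun p : K × K × V =>
        π (p.2.1 * ∑ i : Fin N, c i * p.1 ^ (i : ℕ)) + p.2.2 = t).card
      = Fintype.card K * Fintype.card K := by
  rw [← Fintype.card_subtype]
  have e : {p : K × K × V // π (p.2.1 * ∑ i : Fin N, c i * p.1 ^ (i : ℕ)) + p.2.2 = t}
      ≃ K × K :=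
    { toFun := fun p => (p.1.1, p.1.2.1)
      invFun := fun q => ⟨(q.1, q.2, t - π (q.2 * ∑ i : Fin N, c i * q.1 ^ (i : ℕ))), by
        simp⟩
      left_inv := fun p => by
        obtain ⟨⟨k0, k1, k2⟩, hp⟩ := p
        apply Subtype.ext
        simp only at hp ⊢
        refine Prod.ext rfl (Prod.ext rfl ?_)
        simp [← hp]
      right_inv := fun q => rfl }
  rw [Fintype.card_congr e, Fintype.card_prod]

lemma countB {K V : Type*} [Field K] [Fintype K] [DecidableEq K]
    [AddCommGroup V] [Fintype V] [DecidableEq V] (π : K →+ V) (hπ : Surjective π) {N : ℕ} (c₁ c₂ : Fin N → K) (hcc : c₁ ≠ c₂)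
    (t₁ t₂ : V) :
    (univ.filter fun p : K × K × V =>
        π (p.2.1 * ∑ i : Fin N, c₁ i * p.1 ^ (i : ℕ)) + p.2.2 = t₁ ∧
        π (p.2.1 * ∑ i : Fin N, c₂ i * p.1 ^ (i : ℕ)) + p.2.2 = t₂).card
      ≤ (N - 1) * Fintype.card K
        + Fintype.card K * (Fintype.card K / Fintype.card V) := by
  set x₁ : K → K := fun k0 => ∑ i : Fin N, c₁ i * k0 ^ (i : ℕ) with hx₁
  set x₂ : K → K := fun k0 => ∑ i : Fin N, c₂ i * k0 ^ (i : ℕ) with hx₂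
  set d : K → K := fun k0 => x₁ k0 - x₂ k0 with hd
  set u : V := t₁ - t₂ with hu
  -- reduce to pairs
  have ecard : (univ.filter fun p : K × K × V =>
        π (p.2.1 * x₁ p.1) + p.2.2 = t₁ ∧ π (p.2.1 * x₂ p.1) + p.2.2 = t₂).card
      = Fintype.card {q : K × K // π (q.2 * d q.1) = u} := by
    rw [← Fintype.card_subtype]
    refine Fintype.card_congr ?_
    refine
      { toFun := fun p => ⟨(p.1.1, p.1.2.1), ?_⟩
        invFun := fun q => ⟨(q.1.1, q.1.2, t₂ - π (q.1.2 * x₂ q.1.1)), ?_⟩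
        left_inv := ?_
        right_inv := ?_ }
    · obtain ⟨⟨k0, k1, k2⟩, hp1, hp2⟩ := p
      simp only at hp1 hp2 ⊢
      have : π (k1 * x₁ k0) - π (k1 * x₂ k0) = t₁ - t₂ := by
        rw [← hp1, ← hp2]; abel
      rw [hd, hu]
      simp only [mul_sub, map_sub]
      exact this
    · obtain ⟨⟨k0, k1⟩, hq⟩ := q
      simp only at hq ⊢
      rw [hd, hu, mul_sub, map_sub] at hq
      constructor
      · have h2 : t₁ = π (k1 * x₁ k0) - π (k1 * x₂ k0) + t₂ := by rw [hq]; abel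
        rw [h2]; abel
      · abel
    · rintro ⟨⟨k0, k1, k2⟩, hp1, hp2⟩
      apply Subtype.ext
      simp only at hp2 ⊢
      refine Prod.ext rfl (Prod.ext rfl ?_)
      simp [← hp2]
    · rintro ⟨⟨k0, k1⟩, hq⟩
      rfl
  rw [ecard]
  -- split as a sigma over k0
  rw [Fintype.card_congr (Equiv.subtypeProdEquivSigmaSubtype fun k0 k1 => π (k1 * d k0) = u),
    Fintype.card_sigma]
  -- bound the sum
  have hterm : ∀ k0 : K, d k0 ≠ 0 →
      Fintype.card {k1 : K // π (k1 * d k0) = u} = Fintype.card K / Fintype.card V := by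
    intro k0 hk0
    have hsurj : Surjective fun k1 : K => π (k1 * d k0) := by
      intro y
      obtain ⟨z, hz⟩ := hπ y
      refine ⟨z * (d k0)⁻¹, ?_⟩
      show π (z * (d k0)⁻¹ * d k0) = y
      rw [mul_assoc, inv_mul_cancel₀ hk0, mul_one, hz]
    have := fiber_mul_card (π.comp (AddMonoidHom.mulRight (d k0))) (by exact hsurj) u
    have hVpos : 0 < Fintype.card V := Fintype.card_pos
    rw [Fintype.card_subtype]
    have hfil : (univ.filter fun k1 : K => π (k1 * d k0) = u)
        = (univ.filter fun k1 : K => (π.comp (AddMonoidHom.mulRight (d k0))) k1 = u) := by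
      apply Finset.filter_congr; intro k1 _; simp [AddMonoidHom.mulRight]
    rw [hfil]
    exact (Nat.div_eq_of_eq_mul_left hVpos this.symm).symm
  have hR : (univ.filter fun k0 : K => d k0 = 0).card ≤ N - 1 := by
    have hcc' : c₁ - c₂ ≠ 0 := sub_ne_zero_of_ne hcc
    have := roots_card_le (c₁ - c₂) hcc'
    have hfil : (univ.filter fun k0 : K => d k0 = 0)
        = (univ.filter fun x : K => ∑ i : Fin N, (c₁ - c₂) i * x ^ (i : ℕ) = 0) := by
      apply Finset.filter_congr; intro k0 _
      rw [hd, hx₁, hx₂]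
      simp only [Pi.sub_apply, sub_mul, Finset.sum_sub_distrib]
    rw [hfil]; exact this
  calc ∑ k0 : K, Fintype.card {k1 : K // π (k1 * d k0) = u}
      = ∑ k0 ∈ univ.filter (fun k0 : K => d k0 = 0),
          Fintype.card {k1 : K // π (k1 * d k0) = u}
        + ∑ k0 ∈ univ.filter (fun k0 : K => ¬ d k0 = 0),
          Fintype.card {k1 : K // π (k1 * d k0) = u} :=
        (Finset.sum_filter_add_sum_filter_not univ _ _).symm
    _ ≤ (N - 1) * Fintype.card K + Fintype.card K * (Fintype.card K / Fintype.card V) := by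
        gcongr ?_ + ?_
        · calc ∑ k0 ∈ univ.filter (fun k0 : K => d k0 = 0),
              Fintype.card {k1 : K // π (k1 * d k0) = u}
              ≤ ∑ _k0 ∈ univ.filter (fun k0 : K => d k0 = 0), Fintype.card K := by
                apply Finset.sum_le_sum
                intro k0 _
                exact Fintype.card_subtype_le _
            _ = (univ.filter fun k0 : K => d k0 = 0).card * Fintype.card K := by
                rw [Finset.sum_const, smul_eq_mul]
            _ ≤ (N - 1) * Fintype.card K := Nat.mul_le_mul_right _ hR
        · calc ∑ k0 ∈ univ.filter (fun k0 : K => ¬ d k0 = 0),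
              Fintype.card {k1 : K // π (k1 * d k0) = u}
              = ∑ k0 ∈ univ.filter (fun k0 : K => ¬ d k0 = 0),
                  (Fintype.card K / Fintype.card V) := by
                apply Finset.sum_congr rfl
                intro k0 hk0
                simp only [mem_filter, mem_univ, true_and] at hk0
                exact hterm k0 hk0
            _ ≤ Fintype.card K * (Fintype.card K / Fintype.card V) := by
                rw [Finset.sum_const, smul_eq_mul]
                apply Nat.mul_le_mul_right
                exact (Finset.card_filter_le _ _).trans (le_of_eq (card_univ))

attribute [local instance] Classical.propDecidable

/-- Existence of a 2^{-b+1}-AS2U family from {0,1}^a to {0,1}^b with keys of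
length y = 3b + 2s bits, whenever a ≤ (2^s + 1)(b + s). -/
theorem stmt12 (a b s : ℕ) (ha : 0 < a) (hb : 2 ≤ b) (hs : 0 < s)
    (hlen : a ≤ (2 ^ s + 1) * (b + s)) :
    ∃ f : (Fin (3 * b + 2 * s) → Bool) → (Fin a → Bool) → (Fin b → Bool),
      (∀ (m : Fin a → Bool) (t : Fin b → Bool),
        ((univ.filter fun κ => f κ m = t).card : ℝ) /
            Fintype.card (Fin (3 * b + 2 * s) → Bool)
          = ((2 : ℝ) ^ b)⁻¹) ∧
      (∀ (m₁ m₂ : Fin a → Bool) (t₁ t₂ : Fin b → Bool), m₁ ≠ m₂ →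
        ((univ.filter fun κ => f κ m₁ = t₁ ∧ f κ m₂ = t₂).card : ℝ) /
            ((univ.filter fun κ => f κ m₂ = t₂).card)
          ≤ 2 * ((2 : ℝ) ^ b)⁻¹) := by
  classical
  haveI : Fact (Nat.Prime 2) := ⟨Nat.prime_two⟩
  set n := b + s with hn
  have hn0 : n ≠ 0 := by omega
  have hbn : b ≤ n := by omega
  set K := GaloisField 2 n with hKdef
  haveI : Fintype K := Fintype.ofFinite K
  have hK : Fintype.card K = 2 ^ n := by
    have := GaloisField.card 2 n hn0
    rwa [Nat.card_eq_fintype_card] at this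
  set V := (Fin b → ZMod 2) with hVdef
  have hV : Fintype.card V = 2 ^ b := by
    show Fintype.card (Fin b → ZMod 2) = 2 ^ b
    rw [Fintype.card_fun, ZMod.card]
    simp
  -- surjective linear projection π : K → V
  obtain ⟨eL⟩ : Nonempty (K ≃ₗ[ZMod 2] (Fin n → ZMod 2)) := by
    apply FiniteDimensional.nonempty_linearEquiv_of_finrank_eq
    rw [GaloisField.finrank 2 hn0, Module.finrank_pi]
    simp
  set πL : K →ₗ[ZMod 2] V :=
    (LinearMap.funLeft (ZMod 2) (ZMod 2) (Fin.castLE hbn)).comp eL.toLinearMap with hπL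
  set π : K →+ V := πL.toAddMonoidHom with hπdef
  have hπ : Surjective π := by
    have h1 : Surjective (LinearMap.funLeft (ZMod 2) (ZMod 2) (Fin.castLE hbn) :
        (Fin n → ZMod 2) → (Fin b → ZMod 2)) :=
      LinearMap.funLeft_surjective_of_injective _ _ _ (Fin.castLE_injective hbn)
    exact h1.comp eL.surjective
  -- message encoding
  set N := 2 ^ s + 1 with hNdef
  obtain ⟨emb⟩ : Nonempty ((Fin a → Bool) ↪ (Fin N → K)) := by
    rw [Function.Embedding.nonempty_iff_card_le]
    rw [Fintype.card_fun, Fintype.card_fun, hK]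
    simp only [Fintype.card_bool, Fintype.card_fin, ← pow_mul]
    exact Nat.pow_le_pow_right (by norm_num) (by rw [mul_comm]; exact hlen)
  -- key and tag equivalences
  have hkeys : Fintype.card (Fin (3 * b + 2 * s) → Bool) = Fintype.card (K × K × V) := by
    rw [Fintype.card_fun, Fintype.card_prod, Fintype.card_prod, hK, hV]
    simp only [Fintype.card_bool, Fintype.card_fin, ← pow_add]
    congr 1; omega
  have htags : Fintype.card V = Fintype.card (Fin b → Bool) := by
    rw [hV, Fintype.card_fun]; simp
  set eK : (Fin (3 * b + 2 * s) → Bool) ≃ K × K × V := Fintype.equivOfCardEq hkeys with heK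
  set eT : V ≃ (Fin b → Bool) := Fintype.equivOfCardEq htags with heT
  -- the family
  set F : K × K × V → (Fin a → Bool) → V :=
    fun p m => π (p.2.1 * ∑ i : Fin N, emb m i * p.1 ^ (i : ℕ)) + p.2.2 with hF
  refine ⟨fun κ m => eT (F (eK κ) m), ?_, ?_⟩
  · -- part (i)
    intro m t
    have h1 : (univ.filter fun κ => eT (F (eK κ) m) = t)
        = (univ.filter fun κ => F (eK κ) m = eT.symm t) := by
      apply Finset.filter_congr; intro κ _
      simp [Equiv.apply_eq_iff_eq_symm_apply]
    have h2 : (univ.filter fun κ => F (eK κ) m = eT.symm t).card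
        = (univ.filter fun p : K × K × V => F p m = eT.symm t).card := by
      rw [← Fintype.card_subtype, ← Fintype.card_subtype]
      exact Fintype.card_congr (eK.subtypeEquiv fun κ => Iff.rfl)
    rw [h1, h2, hF]
    rw [countA π (emb m) (eT.symm t), hK]
    rw [Fintype.card_fun]
    simp only [Fintype.card_bool, Fintype.card_fin]
    push_cast
    rw [← pow_add (2:ℝ) n n, show 3 * b + 2 * s = (n + n) + b by omega,
      pow_add (2:ℝ) (n+n) b]
    rw [div_mul_eq_div_div, div_self (by positivity), one_div]
  · -- part (ii)
    intro m₁ m₂ t₁ t₂ hne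
    have key : ∀ (m : Fin a → Bool) (t : Fin b → Bool),
        (univ.filter fun κ => eT (F (eK κ) m) = t).card = 2 ^ n * 2 ^ n := by
      intro m t
      have h1 : (univ.filter fun κ => eT (F (eK κ) m) = t)
          = (univ.filter fun κ => F (eK κ) m = eT.symm t) := by
        apply Finset.filter_congr; intro κ _
        simp [Equiv.apply_eq_iff_eq_symm_apply]
      have h2 : (univ.filter fun κ => F (eK κ) m = eT.symm t).card
          = (univ.filter fun p : K × K × V => F p m = eT.symm t).card := by
        rw [← Fintype.card_subtype, ← Fintype.card_subtype]
        exact Fintype.card_congr (eK.subtypeEquiv fun κ => Iff.rfl)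
      rw [h1, h2, hF, countA π (emb m) (eT.symm t), hK]
    have hnum : (univ.filter fun κ =>
        eT (F (eK κ) m₁) = t₁ ∧ eT (F (eK κ) m₂) = t₂).card ≤ 2 ^ (n + s + 1) := by
      have h1 : (univ.filter fun κ => eT (F (eK κ) m₁) = t₁ ∧ eT (F (eK κ) m₂) = t₂)
          = (univ.filter fun κ =>
              F (eK κ) m₁ = eT.symm t₁ ∧ F (eK κ) m₂ = eT.symm t₂) := by
        apply Finset.filter_congr; intro κ _
        simp [Equiv.apply_eq_iff_eq_symm_apply]
      have h2 : (univ.filter fun κ =>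
            F (eK κ) m₁ = eT.symm t₁ ∧ F (eK κ) m₂ = eT.symm t₂).card
          = (univ.filter fun p : K × K × V =>
              F p m₁ = eT.symm t₁ ∧ F p m₂ = eT.symm t₂).card := by
        rw [← Fintype.card_subtype, ← Fintype.card_subtype]
        exact Fintype.card_congr (eK.subtypeEquiv fun κ => Iff.rfl)
      have hcc : emb m₁ ≠ emb m₂ := fun h => hne (emb.injective h)
      have h3 := countB π hπ (emb m₁) (emb m₂) hcc (eT.symm t₁) (eT.symm t₂)
      rw [hK, hV] at h3
      have h4 : 2 ^ n / 2 ^ b = 2 ^ s := by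
        rw [Nat.pow_div hbn (by norm_num)]
        congr 1; omega
      rw [h4] at h3
      have h5 : (N - 1) * 2 ^ n + 2 ^ n * 2 ^ s = 2 ^ (n + s + 1) := by
        rw [hNdef]
        simp only [Nat.add_sub_cancel]
        rw [pow_add, pow_add, pow_one]
        ring
      rw [h1, h2, hF]
      exact h3.trans (le_of_eq h5)
    rw [key m₂ t₂]
    have hD : ((2 ^ n * 2 ^ n : ℕ) : ℝ) = (2:ℝ) ^ n * 2 ^ n := by push_cast; ring
    rw [hD]
    calc ((univ.filter fun κ =>
          eT (F (eK κ) m₁) = t₁ ∧ eT (F (eK κ) m₂) = t₂).card : ℝ) / ((2:ℝ) ^ n * 2 ^ n)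
        ≤ (2 ^ (n + s + 1) : ℝ) / ((2:ℝ) ^ n * 2 ^ n) := by
          gcongr
          exact_mod_cast hnum
      _ = 2 * ((2:ℝ) ^ b)⁻¹ := by
          rw [← pow_add (2:ℝ) n n, show n + n = (n + s) + b by omega,
            pow_add (2:ℝ) (n+s) b, pow_add (2:ℝ) (n+s) 1, pow_one,
            mul_div_mul_left _ _ (by positivity : (2:ℝ) ^ (n + s) ≠ 0),
            div_eq_mul_inv]
end

section
/- Let N ≥ 4, ω < N/3, and suppose a malicious coalition C of size at most ω (not containing honest recipients i, j) attacks transferability: honest recipient P_i accepts at level l ≥ 1 while honest P_j rejects at level l − 1, under thresholds T_l = ω + lω. If the coalition forces its tests to T_{i,c,l} = 1 and T_{j,c,l−1} = 0 for all c ∈ C, then acceptance by P_i and rejection by P_j jointly imply Σ_{h∉C}(T_{i,h,l} − T_{j,h,l−1}) > ω − |C| ≥ 0; in particular there exists at least one honest index h ∉ C with T_{i,h,l} = 1 and T_{j,h,l−1} = 0. -/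
open Finset

/-- Non-transferability structure: if a coalition C (|C| ≤ ω) forces its tests to
T_{i,c,l} = 1 and T_{j,c,l-1} = 0, then acceptance by P_i at level l and rejection
by P_j at level l-1 imply Σ_{h∉C}(T_{i,h,l} - T_{j,h,l-1}) > ω - |C| ≥ 0; in
particular some honest h ∉ C has T_{i,h,l} = 1 and T_{j,h,l-1} = 0. -/
theorem stmt16 (N ω l : ℕ) (hN : 4 ≤ N) (hω : 1 ≤ ω) (hω3 : 3 * ω < N)
    (hl : 1 ≤ l)
    (C : Finset (Fin N)) (hC : C.card ≤ ω)
    (Ti Tj : Fin N → ℕ)   -- tests T_{i,·,l} and T_{j,·,l-1}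
    (hT : ∀ h, Ti h ≤ 1 ∧ Tj h ≤ 1)
    (hforce : ∀ c ∈ C, Ti c = 1 ∧ Tj c = 0)
    (hacc : ω + l * ω < ∑ h, Ti h)
    (hrej : ∑ h, Tj h ≤ ω + (l - 1) * ω) :
    ((ω : ℤ) - C.card < ∑ h ∈ univ \ C, ((Ti h : ℤ) - (Tj h : ℤ)) ∧
      0 ≤ (ω : ℤ) - C.card) ∧
    ∃ h, h ∉ C ∧ Ti h = 1 ∧ Tj h = 0 := by
  have hCsub : C ⊆ univ := subset_univ C
  -- total difference in ℤ
  have htot : (ω : ℤ) < ∑ h, ((Ti h : ℤ) - (Tj h : ℤ)) := by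
    have h1 : (ω : ℤ) + l * ω < ∑ h, (Ti h : ℤ) := by exact_mod_cast hacc
    have h2 : (∑ h, (Tj h : ℤ)) ≤ ω + (l - 1 : ℕ) * ω := by exact_mod_cast hrej
    have hl' : ((l - 1 : ℕ) : ℤ) = (l : ℤ) - 1 := by
      have := Nat.succ_pred_eq_of_pos hl
      omega
    rw [Finset.sum_sub_distrib]
    rw [hl'] at h2
    nlinarith [h2, h1]
  have hsplit : ∑ h, ((Ti h : ℤ) - (Tj h : ℤ)) =
      (∑ h ∈ univ \ C, ((Ti h : ℤ) - (Tj h : ℤ))) +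
      (∑ h ∈ C, ((Ti h : ℤ) - (Tj h : ℤ))) := by
    rw [Finset.sum_sdiff_eq_sub hCsub]; ring
  have hCsum : ∑ h ∈ C, ((Ti h : ℤ) - (Tj h : ℤ)) = C.card := by
    rw [Finset.sum_congr rfl (fun c hc => ?_), Finset.sum_const, nsmul_eq_mul, mul_one]
    obtain ⟨h1, h2⟩ := hforce c hc
    rw [h1, h2]; norm_num
  have hmain : (ω : ℤ) - C.card < ∑ h ∈ univ \ C, ((Ti h : ℤ) - (Tj h : ℤ)) := by
    rw [hsplit, hCsum] at htot; linarith
  have hnn : (0 : ℤ) ≤ (ω : ℤ) - C.card := by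
    have : (C.card : ℤ) ≤ ω := by exact_mod_cast hC
    linarith
  refine ⟨⟨hmain, hnn⟩, ?_⟩
  by_contra hcon
  push_neg at hcon
  have hle : ∀ h ∈ univ \ C, ((Ti h : ℤ) - (Tj h : ℤ)) ≤ 0 := by
    intro h hh
    rw [Finset.mem_sdiff] at hh
    obtain ⟨hti, htj⟩ := hT h
    by_contra hpos
    push_neg at hpos
    have h10 : Ti h = 1 ∧ Tj h = 0 := by omega
    exact hcon h hh.2 h10.1 h10.2
  have : ∑ h ∈ univ \ C, ((Ti h : ℤ) - (Tj h : ℤ)) ≤ 0 :=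
    Finset.sum_nonpos hle
  linarith
end
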